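/- arXiv:1905.13296 — 2 statements merged into one kernel-verified Lean document; each statement's English description precedes it below -/
import Mathlib

section
/- If the pair (A, B) is controllable and the range of B is contained in the range of D, then for every matrix K the pair (A + BK, D) is controllable. -/
theorem closed_loop_controllable {n m d : ℕ}
    (A : Matrix (Fin n) (Fin n) ℝ) (B : Matrix (Fin n) (Fin m) ℝ)
    (D : Matrix (Fin n) (Fin d) ℝ)
    (hctrb : (Matrix.of fun (i : Fin n) (p : Fin n × Fin m) =>
        (A ^ (p.1 : ℕ) * B) i p.2).rank = n)
    (hrange : LinearMap.range B.mulVecLin ≤ LinearMap.range D.mulVecLin) :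
    ∀ K : Matrix (Fin m) (Fin n) ℝ,
      (Matrix.of fun (i : Fin n) (p : Fin n × Fin d) =>
        ((A + B * K) ^ (p.1 : ℕ) * D) i p.2).rank = n := by
  intro K
  set C : Matrix (Fin n) (Fin n) ℝ := A + B * K with hC
  set M : Matrix (Fin n) (Fin n × Fin d) ℝ :=
    Matrix.of fun (i : Fin n) (p : Fin n × Fin d) => (C ^ (p.1 : ℕ) * D) i p.2 with hM
  set S : Submodule ℝ (Fin n → ℝ) := LinearMap.range M.mulVecLin with hS
  -- Lemma 1: columns combos of C^j * D lie in S
  have lem1 : ∀ (j : Fin n) (x : Fin d → ℝ), (C ^ (j : ℕ) * D).mulVec x ∈ S := by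
    intro j x
    refine ⟨fun p => if p.1 = j then x p.2 else 0, ?_⟩
    show M.mulVec _ = _
    funext i
    simp only [Matrix.mulVec, dotProduct, hM, Matrix.of_apply,
      Fintype.sum_prod_type, mul_ite, mul_zero]
    rw [Finset.sum_comm]
    simp [Finset.sum_ite_eq']
  -- the matrix power identity
  have key : ∀ i : ℕ, C ^ i = A ^ i + ∑ j ∈ Finset.range i, C ^ (i - 1 - j) * (B * K) * A ^ j := by
    intro i
    induction i with
    | zero => simp
    | succ i ih =>
      have : C ^ (i + 1) = C * C ^ i := by rw [pow_succ']
      rw [this, ih, mul_add, Finset.mul_sum]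
      rw [Finset.sum_range_succ]
      have h1 : C * A ^ i = A ^ (i + 1) + (B * K) * A ^ i := by
        rw [hC, add_mul, pow_succ']
      have h2 : ∀ j ∈ Finset.range i,
          C * (C ^ (i - 1 - j) * (B * K) * A ^ j) = C ^ (i + 1 - 1 - j) * (B * K) * A ^ j := by
        intro j hj
        rw [Finset.mem_range] at hj
        have : i + 1 - 1 - j = (i - 1 - j) + 1 := by omega
        rw [this, pow_succ', ← mul_assoc, ← mul_assoc]
      rw [Finset.sum_congr rfl h2, h1]
      have : i + 1 - 1 - i = 0 := by omega
      rw [this, pow_zero, one_mul]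
      abel
  -- Lemma 2: A^i applied to range D lies in S, for i < n
  have lem2 : ∀ (i : Fin n) (w : Fin d → ℝ), (A ^ (i : ℕ)).mulVec (D.mulVec w) ∈ S := by
    intro i w
    have hAi : (A ^ (i : ℕ)).mulVec (D.mulVec w)
        = (C ^ (i : ℕ)).mulVec (D.mulVec w)
          - ∑ j ∈ Finset.range i, (C ^ ((i : ℕ) - 1 - j) * (B * K) * A ^ j).mulVec (D.mulVec w) := by
      have := key (i : ℕ)
      have hA : A ^ (i : ℕ) = C ^ (i : ℕ)
          - ∑ j ∈ Finset.range i, C ^ ((i : ℕ) - 1 - j) * (B * K) * A ^ j := by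
        rw [this]; abel
      rw [hA, Matrix.sub_mulVec]
      congr 1
      induction Finset.range (i : ℕ) using Finset.induction with
      | empty => simp [Matrix.zero_mulVec]
      | insert _ _ hx ih2 => rw [Finset.sum_insert hx, Finset.sum_insert hx, Matrix.add_mulVec, ih2]
    rw [hAi]
    have hfirst : (C ^ (i : ℕ)).mulVec (D.mulVec w) ∈ S := by
      have := lem1 i w
      rwa [← Matrix.mulVec_mulVec] at this
    refine Submodule.sub_mem S hfirst (Submodule.sum_mem S ?_)
    intro j hj
    rw [Finset.mem_range] at hj
    -- the term equals C^(i-1-j) applied to B applied to something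
    have hterm : (C ^ ((i : ℕ) - 1 - j) * (B * K) * A ^ j).mulVec (D.mulVec w)
        = (C ^ ((i : ℕ) - 1 - j)).mulVec (B.mulVec ((K * (A ^ j * D)).mulVec w)) := by
      rw [Matrix.mulVec_mulVec, Matrix.mulVec_mulVec, Matrix.mulVec_mulVec]
      simp only [Matrix.mul_assoc]
    rw [hterm]
    obtain ⟨w', hw'⟩ := hrange ⟨(K * (A ^ j * D)).mulVec w, rfl⟩
    simp only [Matrix.mulVecLin_apply] at hw'
    rw [← hw']
    have hlt : (i : ℕ) - 1 - j < n := by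
      have := i.2; omega
    have := lem1 ⟨(i : ℕ) - 1 - j, hlt⟩ w'
    rwa [← Matrix.mulVec_mulVec] at this
  -- open-loop range is top
  set N : Matrix (Fin n) (Fin n × Fin m) ℝ :=
    Matrix.of fun (i : Fin n) (p : Fin n × Fin m) => (A ^ (p.1 : ℕ) * B) i p.2 with hN
  have hNtop : LinearMap.range N.mulVecLin = ⊤ := by
    apply Submodule.eq_top_of_finrank_eq
    rw [show Module.finrank ℝ (LinearMap.range N.mulVecLin) = N.rank from rfl, hctrb,
      Module.finrank_fin_fun]
  -- every column of N lies in S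
  have hNle : LinearMap.range N.mulVecLin ≤ S := by
    rw [Matrix.range_mulVecLin, Submodule.span_le]
    rintro _ ⟨p, rfl⟩
    have hcol : N.col p = (A ^ (p.1 : ℕ)).mulVec (B.mulVec (Pi.single p.2 1)) := by
      funext i
      rw [Matrix.mulVec_mulVec]
      simp [Matrix.mulVec, dotProduct, Pi.single_apply, hN, Matrix.col_apply]
    rw [hcol]
    obtain ⟨w', hw'⟩ := hrange ⟨Pi.single p.2 1, rfl⟩
    simp only [Matrix.mulVecLin_apply] at hw'
    rw [← hw']
    exact lem2 p.1 w'
  have hStop : S = ⊤ := top_le_iff.mp (hNtop ▸ hNle)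
  rw [show (Matrix.of fun (i : Fin n) (p : Fin n × Fin d) =>
        ((A + B * K) ^ (p.1 : ℕ) * D) i p.2).rank = Module.finrank ℝ S from rfl,
    hStop, finrank_top, Module.finrank_fin_fun]
end

section
/- With the same setup (u_k = v_k + K_k y_k, y_{k+1} = A y_k + D w_k, y₀ = x₀ − μ₀), the covariance of x_k is Cov(x_k) = Ψ_k Σ₀ Ψ_kᵀ + ∑_{j=0}^{k−1} Θ_{k,j} Θ_{k,j}ᵀ, where the matrices Ψ_k, Θ_{k,j} are determined by A, B, D and the gains K₀,…,K_{k−1}, independently of the v_j and μ₀. In particular, Cov(x_k) does not depend on the feedforward sequence v₀,…,v_{k−1}. -/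
open Matrix MeasureTheory

lemma integral_sum_mul_sum_aux {Ω : Type} [MeasurableSpace Ω] (P : Measure Ω)
    {ι : Type} (s : Finset ι) (c e : ι → ℝ) (ξ : ι → Ω → ℝ)
    (hint : ∀ a ∈ s, ∀ b ∈ s, Integrable (fun ω => ξ a ω * ξ b ω) P) :
    ∫ ω, (∑ a ∈ s, c a * ξ a ω) * (∑ b ∈ s, e b * ξ b ω) ∂P
      = ∑ a ∈ s, ∑ b ∈ s, c a * e b * ∫ ω, ξ a ω * ξ b ω ∂P := by
  have h1 : ∀ ω, (∑ a ∈ s, c a * ξ a ω) * (∑ b ∈ s, e b * ξ b ω)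
      = ∑ a ∈ s, ∑ b ∈ s, c a * e b * (ξ a ω * ξ b ω) := by
    intro ω
    rw [Finset.sum_mul_sum]
    exact Finset.sum_congr rfl fun a _ => Finset.sum_congr rfl fun b _ => by ring
  simp only [h1]
  rw [integral_finset_sum _ (fun a ha => integrable_finset_sum _
    (fun b hb => ((hint a ha b hb).const_mul _)))]
  refine Finset.sum_congr rfl fun a ha => ?_
  rw [integral_finset_sum _ (fun b hb => ((hint a ha b hb).const_mul _))]
  exact Finset.sum_congr rfl fun b hb => integral_const_mul _ _

/-- The state-transition-like matrix `Ψ` for the centered closed-loop state. -/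
def psiAux {n m : ℕ} (A : Matrix (Fin n) (Fin n) ℝ) (B : Matrix (Fin n) (Fin m) ℝ)
    (K : ℕ → Matrix (Fin m) (Fin n) ℝ) : ℕ → Matrix (Fin n) (Fin n) ℝ
  | 0 => 1
  | (k+1) => A * psiAux A B K k + B * K k * A ^ k

/-- The noise-to-state matrices `Θ`. -/
def thetaAux {n m d : ℕ} (A : Matrix (Fin n) (Fin n) ℝ) (B : Matrix (Fin n) (Fin m) ℝ)
    (D : Matrix (Fin n) (Fin d) ℝ) (K : ℕ → Matrix (Fin m) (Fin n) ℝ) :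
    ℕ → ℕ → Matrix (Fin n) (Fin d) ℝ
  | 0, _ => 0
  | (k+1), j => if j = k then D else
      A * thetaAux A B D K k j + B * K k * (A ^ (k - 1 - j) * D)

/-- Under the filtered-noise affine feedback `u_k = v_k + K_k y_k`, the covariance of the
closed-loop state has the form `Ψ_k Σ₀ Ψ_kᵀ + ∑_{j<k} Θ_{k,j} Θ_{k,j}ᵀ`, where `Ψ` and `Θ`
depend only on `A`, `B`, `D` and the gains `K`; in particular it does not depend on the
feedforward terms `v` nor on `μ₀`. -/
theorem closed_loop_covariance_structure {n m d : ℕ}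
    (A : Matrix (Fin n) (Fin n) ℝ) (B : Matrix (Fin n) (Fin m) ℝ)
    (D : Matrix (Fin n) (Fin d) ℝ) (K : ℕ → Matrix (Fin m) (Fin n) ℝ) :
    ∃ (Ψ : ℕ → Matrix (Fin n) (Fin n) ℝ) (Θ : ℕ → ℕ → Matrix (Fin n) (Fin d) ℝ),
      ∀ (Ω : Type) (_ : MeasurableSpace Ω) (P : Measure Ω), IsProbabilityMeasure P →
      ∀ (v : ℕ → Fin m → ℝ) (μ₀ : Fin n → ℝ) (Sig0 : Matrix (Fin n) (Fin n) ℝ)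
        (x₀ : Ω → Fin n → ℝ) (w : ℕ → Ω → Fin d → ℝ)
        (x y : ℕ → Ω → Fin n → ℝ),
        -- dynamics
        (x 0 = x₀) →
        (∀ k ω, x (k + 1) ω = A *ᵥ x k ω + B *ᵥ (v k + K k *ᵥ y k ω) + D *ᵥ w k ω) →
        (∀ ω, y 0 ω = x₀ ω - μ₀) →
        (∀ k ω, y (k + 1) ω = A *ᵥ y k ω + D *ᵥ w k ω) →
        -- first moments
        (∀ i, Integrable (fun ω => x₀ ω i) P) →
        (∀ i, ∫ ω, x₀ ω i ∂P = μ₀ i) →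
        (∀ k i, Integrable (fun ω => w k ω i) P) →
        (∀ k i, ∫ ω, w k ω i ∂P = 0) →
        -- second moments: initial covariance, identity noise covariance,
        -- mutual independence of noises, independence of noise from x₀
        (∀ i j, Integrable (fun ω => (x₀ ω i - μ₀ i) * (x₀ ω j - μ₀ j)) P) →
        (∀ i j, ∫ ω, (x₀ ω i - μ₀ i) * (x₀ ω j - μ₀ j) ∂P = Sig0 i j) →
        (∀ k l i j, Integrable (fun ω => w k ω i * w l ω j) P) →
        (∀ k i j, ∫ ω, w k ω i * w k ω j ∂P = (1 : Matrix (Fin d) (Fin d) ℝ) i j) →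
        (∀ k l i j, k ≠ l → ∫ ω, w k ω i * w l ω j ∂P = 0) →
        (∀ k i j, Integrable (fun ω => (x₀ ω i - μ₀ i) * w k ω j) P) →
        (∀ k i j, ∫ ω, (x₀ ω i - μ₀ i) * w k ω j ∂P = 0) →
        -- integrability of the state and its second moments
        (∀ k i, Integrable (fun ω => x k ω i) P) →
        (∀ k i j, Integrable (fun ω =>
            (x k ω i - ∫ ω', x k ω' i ∂P) * (x k ω j - ∫ ω', x k ω' j ∂P)) P) →
        -- conclusion: the covariance of x_k is Ψ_k Σ₀ Ψ_kᵀ + ∑_{j<k} Θ_{k,j} Θ_{k,j}ᵀ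
        ∀ k i j,
          ∫ ω, (x k ω i - ∫ ω', x k ω' i ∂P) * (x k ω j - ∫ ω', x k ω' j ∂P) ∂P
            = (Ψ k * Sig0 * (Ψ k)ᵀ
                + ∑ l ∈ Finset.range k, Θ k l * (Θ k l)ᵀ) i j := by
  refine ⟨psiAux A B K, thetaAux A B D K, ?_⟩
  intro Ω _ P hP v μ₀ Sig0 x₀ w x y hx0 hxs hy0 hys hx0int hx0mean hwint hwmean
    hcovint hcov hwwint hww hwwd hzwint hzw hxint hxxint k i j
  set Ψ := psiAux A B K with hΨdef
  set Θ := thetaAux A B D K with hΘdef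
  -- the deterministic mean recursion
  set c : ℕ → Fin n → ℝ := fun k => Nat.rec μ₀ (fun k ck => A *ᵥ ck + B *ᵥ v k) k with hc
  -- representation of y
  have hy : ∀ k ω, y k ω = A ^ k *ᵥ (x₀ ω - μ₀)
      + ∑ l ∈ Finset.range k, (A ^ (k - 1 - l) * D) *ᵥ w l ω := by
    intro k
    induction k with
    | zero => intro ω; simp [hy0 ω]
    | succ k ih =>
      intro ω
      rw [hys k ω, ih ω, Matrix.mulVec_add, Matrix.mulVec_mulVec, ← pow_succ',
        Finset.sum_range_succ]
      have hsum : A *ᵥ (∑ l ∈ Finset.range k, (A ^ (k - 1 - l) * D) *ᵥ w l ω)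
          = ∑ l ∈ Finset.range k, (A ^ (k + 1 - 1 - l) * D) *ᵥ w l ω := by
        rw [show (A *ᵥ ∑ l ∈ Finset.range k, (A ^ (k - 1 - l) * D) *ᵥ w l ω)
            = A.mulVecLin (∑ l ∈ Finset.range k, (A ^ (k - 1 - l) * D) *ᵥ w l ω) from rfl,
          map_sum]
        refine Finset.sum_congr rfl fun l hl => ?_
        have hl' : l < k := Finset.mem_range.mp hl
        have he : k + 1 - 1 - l = (k - 1 - l) + 1 := by omega
        rw [Matrix.mulVecLin_apply, Matrix.mulVec_mulVec, ← Matrix.mul_assoc,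
          ← pow_succ', he]
      rw [hsum]
      have : k + 1 - 1 - k = 0 := by omega
      rw [this, pow_zero, Matrix.one_mul]
      abel
  -- representation of x
  have hx : ∀ k ω, x k ω = c k + (Ψ k *ᵥ (x₀ ω - μ₀)
      + ∑ l ∈ Finset.range k, Θ k l *ᵥ w l ω) := by
    intro k
    induction k with
    | zero =>
      intro ω
      simp [hx0, hΨdef, psiAux, hc]
    | succ k ih =>
      intro ω
      rw [hxs k ω, ih ω, hy k ω]
      have hc1 : c (k+1) = A *ᵥ c k + B *ᵥ v k := rfl
      have hΨ1 : Ψ (k+1) = A * Ψ k + B * K k * A ^ k := rfl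
      have hΘsum : ∑ l ∈ Finset.range (k+1), Θ (k+1) l *ᵥ w l ω
          = (∑ l ∈ Finset.range k,
              ((A * Θ k l) *ᵥ w l ω + (B * K k * (A ^ (k - 1 - l) * D)) *ᵥ w l ω))
            + D *ᵥ w k ω := by
        rw [Finset.sum_range_succ]
        congr 1
        · refine Finset.sum_congr rfl fun l hl => ?_
          have hl' : l < k := Finset.mem_range.mp hl
          have : Θ (k+1) l = A * Θ k l + B * K k * (A ^ (k - 1 - l) * D) := by
            simp [hΘdef, thetaAux, Nat.ne_of_lt hl']
          rw [this, Matrix.add_mulVec]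
        · simp [hΘdef, thetaAux]
      rw [hΘsum, hc1, hΨ1]
      have hA : ∀ (s : Finset ℕ) (f : ℕ → Fin n → ℝ),
          A *ᵥ (∑ l ∈ s, f l) = ∑ l ∈ s, A *ᵥ f l := by
        intro s f
        rw [show (A *ᵥ ∑ l ∈ s, f l) = A.mulVecLin (∑ l ∈ s, f l) from rfl, map_sum]
        rfl
      have hBK : ∀ (s : Finset ℕ) (f : ℕ → Fin n → ℝ),
          (B * K k) *ᵥ (∑ l ∈ s, f l) = ∑ l ∈ s, (B * K k) *ᵥ f l := by
        intro s f
        rw [show ((B * K k) *ᵥ ∑ l ∈ s, f l) = (B * K k).mulVecLin (∑ l ∈ s, f l) from rfl,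
          map_sum]
        rfl
      simp only [Matrix.mulVec_add, Matrix.add_mulVec, Matrix.mulVec_mulVec, hA, hBK,
        ← Matrix.mul_assoc, Finset.sum_add_distrib]
      abel
  -- indexing of elementary random variables
  set ξ : (Fin n ⊕ ℕ × Fin d) → Ω → ℝ :=
    fun a ω => Sum.elim (fun p => x₀ ω p - μ₀ p) (fun lq => w lq.1 ω lq.2) a with hξ
  set s : Finset (Fin n ⊕ ℕ × Fin d) :=
    Finset.disjSum Finset.univ ((Finset.range k) ×ˢ Finset.univ) with hs
  set cf : Fin n → (Fin n ⊕ ℕ × Fin d) → ℝ :=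
    fun i a => Sum.elim (fun p => Ψ k i p) (fun lq => Θ k lq.1 i lq.2) a with hcf
  have hrepr : ∀ ω i', (Ψ k *ᵥ (x₀ ω - μ₀) + ∑ l ∈ Finset.range k, Θ k l *ᵥ w l ω) i'
      = ∑ a ∈ s, cf i' a * ξ a ω := by
    intro ω i'
    rw [hs, Finset.sum_disjSum]
    simp [hcf, hξ, Matrix.mulVec, dotProduct, Finset.sum_apply, Finset.sum_product]
  have hξint : ∀ a, Integrable (fun ω => ξ a ω) P := by
    rintro (p | ⟨l, q⟩)
    · exact (hx0int p).sub (integrable_const _)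
    · exact hwint l q
  have hξ0 : ∀ a, ∫ ω, ξ a ω ∂P = 0 := by
    rintro (p | ⟨l, q⟩)
    · simp [hξ, integral_sub (hx0int p) (integrable_const _), hx0mean, integral_const]
    · exact hwmean l q
  have hξξint : ∀ a ∈ s, ∀ b ∈ s, Integrable (fun ω => ξ a ω * ξ b ω) P := by
    rintro (p | ⟨l, q⟩) _ (p' | ⟨l', q'⟩) _
    · exact hcovint p p'
    · exact hzwint l' p q'
    · exact (hzwint l p' q).congr (Filter.Eventually.of_forall fun ω => mul_comm _ _)
    · exact hwwint l l' q q'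
  -- mean of the state
  have hmean : ∀ i', ∫ ω, x k ω i' ∂P = c k i' := by
    intro i'
    have : (fun ω => x k ω i') = fun ω => c k i' + ∑ a ∈ s, cf i' a * ξ a ω := by
      funext ω
      rw [hx k ω, Pi.add_apply, hrepr ω i']
    rw [this, integral_add (integrable_const _)
      (integrable_finset_sum _ fun a _ => (hξint a).const_mul _),
      integral_finset_sum _ fun a _ => (hξint a).const_mul _]
    simp [integral_const_mul, hξ0]
  -- pointwise form of the centered state
  have hcent : ∀ i' ω, x k ω i' - ∫ ω', x k ω' i' ∂P = ∑ a ∈ s, cf i' a * ξ a ω := by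
    intro i' ω
    rw [hmean i', hx k ω, Pi.add_apply, hrepr ω i']
    ring
  simp only [hcent]
  rw [integral_sum_mul_sum_aux P s (cf i) (cf j) ξ hξξint]
  -- now compute the double sum
  rw [hs]
  rw [Finset.sum_disjSum]
  have h1 : ∀ a, ∑ b ∈ Finset.disjSum Finset.univ ((Finset.range k) ×ˢ Finset.univ),
      cf i a * cf j b * ∫ ω, ξ a ω * ξ b ω ∂P
      = (∑ p' : Fin n, cf i a * cf j (Sum.inl p') * ∫ ω, ξ a ω * ξ (Sum.inl p') ω ∂P)
        + ∑ lq ∈ (Finset.range k) ×ˢ Finset.univ,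
            cf i a * cf j (Sum.inr lq) * ∫ ω, ξ a ω * ξ (Sum.inr lq) ω ∂P := by
    intro a; rw [Finset.sum_disjSum]
  simp only [h1]
  rw [Finset.sum_add_distrib, Finset.sum_add_distrib]
  -- the four blocks
  have hblock12 : ∑ p : Fin n, ∑ lq ∈ (Finset.range k) ×ˢ Finset.univ,
      cf i (Sum.inl p) * cf j (Sum.inr lq) * ∫ ω, ξ (Sum.inl p) ω * ξ (Sum.inr lq) ω ∂P = 0 := by
    refine Finset.sum_eq_zero fun p _ => Finset.sum_eq_zero fun lq _ => ?_
    simp [hξ, hzw]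
  have hblock21 : ∑ lq ∈ (Finset.range k) ×ˢ Finset.univ, ∑ p : Fin n,
      cf i (Sum.inr lq) * cf j (Sum.inl p) * ∫ ω, ξ (Sum.inr lq) ω * ξ (Sum.inl p) ω ∂P = 0 := by
    refine Finset.sum_eq_zero fun lq _ => Finset.sum_eq_zero fun p _ => ?_
    have : ∫ ω, ξ (Sum.inr lq) ω * ξ (Sum.inl p) ω ∂P = 0 := by
      rw [show (fun ω => ξ (Sum.inr lq) ω * ξ (Sum.inl p) ω)
          = fun ω => ξ (Sum.inl p) ω * ξ (Sum.inr lq) ω from funext fun ω => mul_comm _ _]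
      exact hzw lq.1 p lq.2
    rw [this, mul_zero]
  have hblock11 : ∑ p : Fin n, ∑ p' : Fin n,
      cf i (Sum.inl p) * cf j (Sum.inl p') * ∫ ω, ξ (Sum.inl p) ω * ξ (Sum.inl p') ω ∂P
      = (Ψ k * Sig0 * (Ψ k)ᵀ) i j := by
    simp only [hcf, hξ, Sum.elim_inl, hcov]
    rw [Matrix.mul_apply]
    rw [Finset.sum_comm]
    refine Finset.sum_congr rfl fun p' _ => ?_
    rw [Matrix.mul_apply, Finset.sum_mul]
    refine Finset.sum_congr rfl fun p _ => ?_
    rw [Matrix.transpose_apply]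
    ring
  have hblock22 : ∑ lq ∈ (Finset.range k) ×ˢ Finset.univ,
      ∑ lq' ∈ (Finset.range k) ×ˢ Finset.univ,
      cf i (Sum.inr lq) * cf j (Sum.inr lq') * ∫ ω, ξ (Sum.inr lq) ω * ξ (Sum.inr lq') ω ∂P
      = (∑ l ∈ Finset.range k, Θ k l * (Θ k l)ᵀ) i j := by
    rw [Finset.sum_product]
    rw [Matrix.sum_apply]
    refine Finset.sum_congr rfl fun l hl => ?_
    have hinner : ∀ q : Fin d, ∑ lq' ∈ (Finset.range k) ×ˢ Finset.univ,
        cf i (Sum.inr (l, q)) * cf j (Sum.inr lq')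
          * ∫ ω, ξ (Sum.inr (l, q)) ω * ξ (Sum.inr lq') ω ∂P
        = Θ k l i q * Θ k l j q := by
      intro q
      rw [Finset.sum_product]
      rw [Finset.sum_eq_single l]
      · simp only [hcf, hξ, Sum.elim_inr, hww]
        rw [Finset.sum_eq_single q]
        · simp [Matrix.one_apply]
        · intro q' _ hq'
          simp [Matrix.one_apply, Ne.symm hq']
        · intro hq; exact absurd (Finset.mem_univ q) hq
      · intro l' _ hl'
        refine Finset.sum_eq_zero fun q' _ => ?_
        simp only [hcf, hξ, Sum.elim_inr]
        rw [hwwd l l' q q' (Ne.symm hl'), mul_zero]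
      · intro hlk; exact absurd hl hlk
    rw [Finset.sum_congr rfl fun q _ => hinner q]
    simp [Matrix.mul_apply, Matrix.transpose_apply]
  rw [hblock11, hblock12, hblock21, hblock22, Matrix.add_apply]
  ring
end
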